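/- For every z ∈ ℂ ∖ D one has ∫_a^b (1 + i·g'(x)) (z − x − i·g(x))⁻¹ · K(x + i·g(x)) dx = ∫_a^b (z − x)⁻¹ · K(x) dx; that is, outside the region D enclosed between the real interval [a,b] and the deformed contour Γ, the contour-deformed integral coincides with the original one. -/

import Mathlib

open MeasureTheory Set Complex
open scoped Interval

set_option maxHeartbeats 4000000
set_option synthInstance.maxHeartbeats 1000000

noncomputable section

variable {H : Type*} [NormedAddCommGroup H] [InnerProductSpace ℂ H] [CompleteSpace H]

/-- The compact region `D` between the real interval `[a,b]` and the deformed
contour `Γ = {x + i g(x) : x ∈ [a,b]}` (here `g ≤ 0` on `[a,b]`). -/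
def regionD (a b : ℝ) (g : ℝ → ℝ) : Set ℂ :=
  {z : ℂ | z.re ∈ Set.Icc a b ∧ z.im ∈ Set.Icc (g z.re) 0}

lemma hasDerivAt_ofReal_comp' {u : ℝ → ℝ} {u' x : ℝ} (hu : HasDerivAt u u' x) :
    HasDerivAt (fun y => ((u y : ℝ) : ℂ)) ((u' : ℝ) : ℂ) x := by
  exact hu.ofReal_comp

/-- outside the region `D` enclosed between `[a,b]` and the deformed
contour, the contour-deformed integral coincides with the original one. -/
theorem statement14 (a b : ℝ) (hab : a < b)
    (g : ℝ → ℝ) (hg : ContDiff ℝ 1 g) (hga : g a = 0) (hgb : g b = 0)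
    (hgneg : ∀ x ∈ Set.Icc a b, g x ≤ 0)
    (K : ℂ → H →L[ℂ] H) (U : Set ℂ) (hU : IsOpen U) (hDU : regionD a b g ⊆ U)
    (hKc : ContinuousOn K (regionD a b g))
    (hKd : ∀ z ∈ U, DifferentiableAt ℂ K z)
    (z : ℂ) (hz : z ∉ regionD a b g) :
    (∫ x in a..b, ((1 + Complex.I * Complex.ofReal (deriv g x)) *
        (z - (x : ℂ) - Complex.I * Complex.ofReal (g x))⁻¹) •
        K ((x : ℂ) + Complex.I * Complex.ofReal (g x)))
      = ∫ x in a..b, ((z - (x : ℂ))⁻¹) • K (x : ℂ) := by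
  classical
  -- the open set where the integrand is holomorphic
  set V : Set ℂ := U \ {z} with hVdef
  have hV : IsOpen V := hU.sdiff isClosed_singleton
  have hDV : regionD a b g ⊆ V := fun w hw => ⟨hDU hw, by
    simp only [mem_singleton_iff]; rintro rfl; exact hz hw⟩
  -- the holomorphic integrand
  set f : ℂ → H →L[ℂ] H := fun w => (z - w)⁻¹ • K w with hfdef
  have hfdOn : DifferentiableOn ℂ f V := by
    intro w hw
    have hzw : z - w ≠ 0 := sub_ne_zero.2 fun h => hw.2 (mem_singleton_iff.2 h.symm)
    exact ((((differentiableAt_const z).sub differentiableAt_id).inv hzw).smul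
      (hKd w hw.1)).differentiableWithinAt
  have hfc : ContinuousOn f V := hfdOn.continuousOn
  have hf'c : ContinuousOn (deriv f) V := ((hfdOn.analyticOnNhd hV).deriv).continuousOn
  have hfD : ∀ w ∈ V, HasDerivAt f (deriv f w) w := fun w hw =>
    (hfdOn.differentiableAt (hV.mem_nhds hw)).hasDerivAt
  -- the homotopy
  set w : ℝ → ℝ → ℂ := fun x t => (x : ℂ) + Complex.I * ((t * g x : ℝ) : ℂ) with hwdef
  have hgc : Continuous g := hg.continuous
  have hg'c : Continuous (deriv g) := hg.continuous_deriv le_rfl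
  have hgd : ∀ x, HasDerivAt g (deriv g x) x := fun x =>
    (hg.differentiable one_ne_zero x).hasDerivAt
  have hwcont : Continuous (fun p : ℝ × ℝ => w p.1 p.2) := by
    apply (Complex.continuous_ofReal.comp continuous_fst).add
    exact continuous_const.mul (Complex.continuous_ofReal.comp
      (continuous_snd.mul (hgc.comp continuous_fst)))
  have hmemD : ∀ x ∈ Icc a b, ∀ t ∈ Icc (0:ℝ) 1, w x t ∈ regionD a b g := by
    intro x hx t ht
    have hre : (w x t).re = x := by simp [hwdef]
    have him : (w x t).im = t * g x := by simp [hwdef]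
    have hgx : g x ≤ 0 := hgneg x hx
    refine ⟨by rw [hre]; exact hx, ?_⟩
    rw [him, hre]
    constructor
    · nlinarith [ht.1, ht.2]
    · nlinarith [ht.1, ht.2]
  have hmemV : ∀ x ∈ Icc a b, ∀ t ∈ Icc (0:ℝ) 1, w x t ∈ V := fun x hx t ht =>
    hDV (hmemD x hx t ht)
  -- derivatives of the homotopy
  have hwt : ∀ x (t : ℝ), HasDerivAt (fun s => w x s) (Complex.I * ((g x : ℝ) : ℂ)) t := by
    intro x t
    have h1 : HasDerivAt (fun s : ℝ => ((s * g x : ℝ) : ℂ)) ((g x : ℝ) : ℂ) t :=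
      hasDerivAt_ofReal_comp' (hasDerivAt_mul_const (g x))
    exact (h1.const_mul Complex.I).const_add (x : ℂ)
  have hwx : ∀ (t : ℝ) (x : ℝ), HasDerivAt (fun y => w y t)
      (1 + Complex.I * ((t * deriv g x : ℝ) : ℂ)) x := by
    intro t x
    have h0 : HasDerivAt (fun y : ℝ => (y : ℂ)) 1 x := by
      simpa using hasDerivAt_ofReal_comp' (hasDerivAt_id x)
    have h1 : HasDerivAt (fun y : ℝ => ((t * g y : ℝ) : ℂ)) ((t * deriv g x : ℝ) : ℂ) x :=
      hasDerivAt_ofReal_comp' ((hgd x).const_mul t)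
    exact h0.add (h1.const_mul Complex.I)
  -- F and its x-derivative F'
  set F : ℝ → ℝ → H →L[ℂ] H := fun x t => (Complex.I * ((g x : ℝ) : ℂ)) • f (w x t)
    with hFdef
  set F' : ℝ → ℝ → H →L[ℂ] H := fun x t =>
      (Complex.I * ((g x : ℝ) : ℂ)) •
        ((1 + Complex.I * ((t * deriv g x : ℝ) : ℂ)) • deriv f (w x t)) +
      (Complex.I * ((deriv g x : ℝ) : ℂ)) • f (w x t) with hF'def
  -- x-derivative of F, valid whenever x ∈ Icc a b so that w x t ∈ V
  have hFderiv : ∀ x ∈ Icc a b, ∀ t ∈ Icc (0:ℝ) 1,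
      HasDerivAt (fun y => F y t) (F' x t) x := by
    intro x hx t ht
    have hc : HasDerivAt (fun y : ℝ => Complex.I * ((g y : ℝ) : ℂ))
        (Complex.I * ((deriv g x : ℝ) : ℂ)) x :=
      (hasDerivAt_ofReal_comp' (hgd x)).const_mul Complex.I
    have hu : HasDerivAt (fun y => f (w y t))
        ((1 + Complex.I * ((t * deriv g x : ℝ) : ℂ)) • deriv f (w x t)) x := by
      have := (hfD _ (hmemV x hx t ht)).scomp x (hwx t x)
      exact this
    exact hc.smul hu
  -- continuity of F in both variables on `Icc a b × Icc 0 1`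
  have hFcont : ContinuousOn (fun p : ℝ × ℝ => F p.1 p.2) (Icc a b ×ˢ Icc (0:ℝ) 1) := by
    have hmaps : MapsTo (fun p : ℝ × ℝ => w p.1 p.2) (Icc a b ×ˢ Icc (0:ℝ) 1) V :=
      fun p hp => hmemV p.1 hp.1 p.2 hp.2
    exact ((continuous_const.mul (Complex.continuous_ofReal.comp
      (hgc.comp continuous_fst))).continuousOn).smul
      (hfc.comp hwcont.continuousOn hmaps)
  -- continuity of F' in both variables on any subset of `Icc a b × Icc 0 1`
  have hF'cont : ContinuousOn (fun p : ℝ × ℝ => F' p.1 p.2) (Icc a b ×ˢ Icc (0:ℝ) 1) := by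
    have hmaps : MapsTo (fun p : ℝ × ℝ => w p.1 p.2) (Icc a b ×ˢ Icc (0:ℝ) 1) V :=
      fun p hp => hmemV p.1 hp.1 p.2 hp.2
    have h1 : ContinuousOn (fun p : ℝ × ℝ => deriv f (w p.1 p.2))
        (Icc a b ×ˢ Icc (0:ℝ) 1) := hf'c.comp hwcont.continuousOn hmaps
    have h2 : ContinuousOn (fun p : ℝ × ℝ => f (w p.1 p.2))
        (Icc a b ×ˢ Icc (0:ℝ) 1) := hfc.comp hwcont.continuousOn hmaps
    apply ContinuousOn.add
    · exact ((continuous_const.mul (Complex.continuous_ofReal.comp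
        (hgc.comp continuous_fst))).continuousOn).smul
        ((((continuous_const.add (continuous_const.mul
          (Complex.continuous_ofReal.comp (continuous_snd.mul
          (hg'c.comp continuous_fst)))))).continuousOn).smul h1)
    · exact ((continuous_const.mul (Complex.continuous_ofReal.comp
        (hg'c.comp continuous_fst))).continuousOn).smul h2
  -- boundedness constants
  have hcomp : IsCompact (Icc a b ×ˢ Icc (0:ℝ) 1) := isCompact_Icc.prod isCompact_Icc
  obtain ⟨C, hC⟩ := hcomp.exists_bound_of_continuousOn hFcont
  obtain ⟨C', hC'⟩ := hcomp.exists_bound_of_continuousOn hF'cont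
  -- the potential Φ
  set Φ : ℝ → H →L[ℂ] H := fun x => ∫ t in (0:ℝ)..1, F x t with hΦdef
  have hIsub : Ι (0:ℝ) 1 ⊆ Icc (0:ℝ) 1 := by
    rw [uIoc_of_le (zero_le_one)]; exact Ioc_subset_Icc_self
  -- measurability / integrability helpers
  have hFmeas : ∀ x ∈ Icc a b, AEStronglyMeasurable (F x) (volume.restrict (Ι (0:ℝ) 1)) := by
    intro x hx
    have : ContinuousOn (F x) (Icc (0:ℝ) 1) := by
      have := hFcont.comp (Continuous.continuousOn (by fun_prop) :
        ContinuousOn (fun t : ℝ => ((x, t) : ℝ × ℝ)) (Icc (0:ℝ) 1))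
        (fun t ht => Set.mk_mem_prod hx ht)
      exact this
    exact (this.mono hIsub).aestronglyMeasurable measurableSet_uIoc
  have hF'contx : ∀ x ∈ Icc a b, ContinuousOn (F' x) (Icc (0:ℝ) 1) := by
    intro x hx
    exact hF'cont.comp (Continuous.continuousOn (by fun_prop))
      (fun t ht => Set.mk_mem_prod hx ht)
  have hFint : ∀ x ∈ Icc a b, IntervalIntegrable (F x) volume 0 1 := by
    intro x hx
    apply ContinuousOn.intervalIntegrable
    rw [uIcc_of_le (zero_le_one)]
    exact hFcont.comp (Continuous.continuousOn (by fun_prop))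
      (fun t ht => Set.mk_mem_prod hx ht)
  -- value of ∫ F' x t dt, by FTC in t
  have hkey : ∀ x ∈ Icc a b, (∫ t in (0:ℝ)..1, F' x t)
      = (1 + Complex.I * ((deriv g x : ℝ) : ℂ)) • f ((x:ℂ) + Complex.I * ((g x : ℝ) : ℂ))
        - f (x : ℂ) := by
    intro x hx
    have hderiv : ∀ t ∈ uIcc (0:ℝ) 1, HasDerivAt
        (fun s => (1 + Complex.I * ((s * deriv g x : ℝ) : ℂ)) • f (w x s)) (F' x t) t := by
      intro t ht
      rw [uIcc_of_le zero_le_one] at ht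
      have hc : HasDerivAt (fun s : ℝ => 1 + Complex.I * ((s * deriv g x : ℝ) : ℂ))
          (Complex.I * ((deriv g x : ℝ) : ℂ)) t := by
        simpa using ((hasDerivAt_ofReal_comp'
          (hasDerivAt_mul_const (deriv g x))).const_mul Complex.I).const_add (1:ℂ)
      have hu : HasDerivAt (fun s => f (w x s))
          ((Complex.I * ((g x : ℝ) : ℂ)) • deriv f (w x t)) t := by
        have := (hfD _ (hmemV x hx t ht)).scomp t (hwt x t)
        exact this
      have h2 := hc.smul hu
      have hcomm : (1 + Complex.I * ((t * deriv g x : ℝ) : ℂ)) •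
            ((Complex.I * ((g x : ℝ) : ℂ)) • deriv f (w x t))
          = (Complex.I * ((g x : ℝ) : ℂ)) •
            ((1 + Complex.I * ((t * deriv g x : ℝ) : ℂ)) • deriv f (w x t)) :=
        smul_comm _ _ _
      rw [hcomm] at h2
      exact h2
    have hint : IntervalIntegrable (F' x) volume 0 1 := by
      apply ContinuousOn.intervalIntegrable
      rw [uIcc_of_le (zero_le_one)]
      exact hF'contx x hx
    have := intervalIntegral.integral_eq_sub_of_hasDerivAt hderiv hint
    rw [this]
    have hw1 : w x 1 = (x:ℂ) + Complex.I * ((g x : ℝ) : ℂ) := by simp [hwdef]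
    have hw0 : w x 0 = (x:ℂ) := by simp [hwdef]
    rw [hw1, hw0]
    norm_num
  -- derivative of Φ on the interior
  have hΦderiv : ∀ x ∈ Ioo a b, HasDerivAt Φ
      ((1 + Complex.I * ((deriv g x : ℝ) : ℂ)) • f ((x:ℂ) + Complex.I * ((g x : ℝ) : ℂ))
        - f (x : ℂ)) x := by
    intro x₀ hx₀
    obtain ⟨ε, hεpos, hball⟩ := Metric.nhds_basis_closedBall.mem_iff.mp
      (isOpen_Ioo.mem_nhds hx₀)
    have hballIcc : Metric.closedBall x₀ ε ⊆ Icc a b := fun y hy =>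
      Ioo_subset_Icc_self (hball hy)
    have main := (intervalIntegral.hasDerivAt_integral_of_dominated_loc_of_deriv_le (Metric.ball_mem_nhds x₀ hεpos)
      (F := F) (F' := F') (x₀ := x₀) (bound := fun _ => C') (a := 0) (b := 1) (μ := volume)
      ?_ ?_ ?_ ?_ ?_ ?_).2
    · rw [hkey x₀ (hballIcc (Metric.mem_closedBall_self hεpos.le))] at main
      exact main
    · filter_upwards [Metric.closedBall_mem_nhds x₀ hεpos] with x hx
      exact hFmeas x (hballIcc hx)
    · exact hFint x₀ (hballIcc (Metric.mem_closedBall_self hεpos.le))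
    · exact ((hF'contx x₀ (hballIcc (Metric.mem_closedBall_self hεpos.le))).mono
        hIsub).aestronglyMeasurable measurableSet_uIoc
    · filter_upwards with t
      intro ht x hx
      exact hC' (x, t) (Set.mk_mem_prod (hballIcc (Metric.ball_subset_closedBall hx))
        (hIsub ht))
    · exact intervalIntegrable_const
    · filter_upwards with t
      intro ht x hx
      exact hFderiv x (hballIcc (Metric.ball_subset_closedBall hx)) t (hIsub ht)
  -- continuity of Φ on [a, b]
  have hΦcont : ContinuousOn Φ (Icc a b) := by
    intro x₀ hx₀
    apply intervalIntegral.continuousWithinAt_of_dominated_interval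
      (bound := fun _ => C)
    · filter_upwards [self_mem_nhdsWithin] with x hx
      exact hFmeas x hx
    · filter_upwards [self_mem_nhdsWithin] with x hx
      filter_upwards with t
      intro ht
      exact hC (x, t) (Set.mk_mem_prod hx (hIsub ht))
    · exact intervalIntegrable_const
    · filter_upwards with t
      intro ht
      have : ContinuousOn (fun x => F x t) (Icc a b) :=
        hFcont.comp (Continuous.continuousOn (by fun_prop))
          (fun x hx => Set.mk_mem_prod hx (hIsub ht))
      exact this x₀ hx₀
  -- Φ vanishes at the endpoints
  have hΦa : Φ a = 0 := by
    simp [hΦdef, hFdef, hga]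
  have hΦb : Φ b = 0 := by
    simp [hΦdef, hFdef, hgb]
  -- integrability of the two integrands over [a,b]
  have hmaps1 : MapsTo (fun x : ℝ => (x:ℂ) + Complex.I * ((g x : ℝ) : ℂ)) (Icc a b) V := by
    intro x hx
    have : (fun x : ℝ => (x:ℂ) + Complex.I * ((g x : ℝ) : ℂ)) x = w x 1 := by
      simp [hwdef]
    rw [this]
    exact hmemV x hx 1 (by norm_num)
  have hmaps0 : MapsTo (fun x : ℝ => ((x:ℝ):ℂ)) (Icc a b) V := by
    intro x hx
    have h0 : ((x:ℝ):ℂ) = w x 0 := by simp [hwdef]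
    show ((x:ℝ):ℂ) ∈ V
    rw [h0]
    exact hmemV x hx 0 (by norm_num)
  have hcont1 : ContinuousOn (fun x : ℝ =>
      (1 + Complex.I * ((deriv g x : ℝ) : ℂ)) • f ((x:ℂ) + Complex.I * ((g x : ℝ) : ℂ)))
      (Icc a b) := by
    apply ContinuousOn.fun_smul
    · exact (continuous_const.add (continuous_const.mul
        (Complex.continuous_ofReal.comp hg'c))).continuousOn
    · exact hfc.comp (Continuous.continuousOn (by fun_prop)) hmaps1
  have hcont0 : ContinuousOn (fun x : ℝ => f ((x:ℝ):ℂ)) (Icc a b) :=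
    hfc.comp Complex.continuous_ofReal.continuousOn hmaps0
  have hint1 : IntervalIntegrable (fun x : ℝ =>
      (1 + Complex.I * ((deriv g x : ℝ) : ℂ)) • f ((x:ℂ) + Complex.I * ((g x : ℝ) : ℂ)))
      volume a b := by
    apply ContinuousOn.intervalIntegrable
    rwa [uIcc_of_le hab.le]
  have hint0 : IntervalIntegrable (fun x : ℝ => f ((x:ℝ):ℂ)) volume a b := by
    apply ContinuousOn.intervalIntegrable
    rwa [uIcc_of_le hab.le]
  -- FTC in x
  have hFTC : (∫ x in a..b,
      ((1 + Complex.I * ((deriv g x : ℝ) : ℂ)) • f ((x:ℂ) + Complex.I * ((g x : ℝ) : ℂ))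
        - f (x : ℂ))) = Φ b - Φ a := by
    apply intervalIntegral.integral_eq_sub_of_hasDeriv_right_of_le hab.le hΦcont
    · intro x hx
      exact (hΦderiv x hx).hasDerivWithinAt
    · exact hint1.sub hint0
  rw [hΦa, hΦb, sub_zero] at hFTC
  have hsplit := intervalIntegral.integral_sub hint1 hint0
  rw [hsplit] at hFTC
  have hmain : (∫ x in a..b,
      (1 + Complex.I * ((deriv g x : ℝ) : ℂ)) • f ((x:ℂ) + Complex.I * ((g x : ℝ) : ℂ)))
      = ∫ x in a..b, f ((x:ℝ):ℂ) := by
    have := sub_eq_zero.mp hFTC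
    exact this
  -- rewrite the two integrands to match the goal
  have hL : ∀ x : ℝ, ((1 + Complex.I * Complex.ofReal (deriv g x)) *
        (z - (x : ℂ) - Complex.I * Complex.ofReal (g x))⁻¹) •
        K ((x : ℂ) + Complex.I * Complex.ofReal (g x))
      = (1 + Complex.I * ((deriv g x : ℝ) : ℂ)) •
          f ((x:ℂ) + Complex.I * ((g x : ℝ) : ℂ)) := by
    intro x
    rw [hfdef]
    simp only
    rw [smul_smul]
    congr 2
    rw [sub_add_eq_sub_sub]
  have hR : ∀ x : ℝ, ((z - (x : ℂ))⁻¹) • K (x : ℂ) = f ((x:ℝ):ℂ) := fun x => rfl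
  calc (∫ x in a..b, ((1 + Complex.I * Complex.ofReal (deriv g x)) *
        (z - (x : ℂ) - Complex.I * Complex.ofReal (g x))⁻¹) •
        K ((x : ℂ) + Complex.I * Complex.ofReal (g x)))
      = ∫ x in a..b, (1 + Complex.I * ((deriv g x : ℝ) : ℂ)) •
          f ((x:ℂ) + Complex.I * ((g x : ℝ) : ℂ)) := by
        apply intervalIntegral.integral_congr; intro x _; exact hL x
    _ = ∫ x in a..b, f ((x:ℝ):ℂ) := hmain
    _ = ∫ x in a..b, ((z - (x : ℂ))⁻¹) • K (x : ℂ) := by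
        apply intervalIntegral.integral_congr; intro x _; exact (hR x).symm

end
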